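/- In a finite T0 topological space, a subset A is locally closed if and only if A is convex with respect to the specialization order (x ≤ y iff x ∈ cl{y}). -/

import Mathlib

/-- In a finite `T0` space, `A` is locally closed iff `A` is convex for the
specialization order `x ≤ y ↔ x ∈ cl {y}`. -/
theorem locallyClosed_iff_convex (X : Type*) [TopologicalSpace X] [Finite X] [T0Space X]
    (A : Set X) :
    (∃ U C : Set X, IsOpen U ∧ IsClosed C ∧ A = U ∩ C) ↔
      (∀ x ∈ A, ∀ z ∈ A, ∀ y : X,
        x ∈ closure ({y} : Set X) → y ∈ closure ({z} : Set X) → y ∈ A) := by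
  constructor
  · rintro ⟨U, C, hU, hC, rfl⟩ x hx z hz y hxy hyz
    refine ⟨?_, ?_⟩
    · -- y ∈ U since x ∈ U is in closure {y}
      have := mem_closure_iff.1 hxy U hU hx.1
      simpa using this
    · -- y ∈ C since y ∈ closure {z} ⊆ C
      exact hC.closure_subset_iff.2 (Set.singleton_subset_iff.2 hz.2) hyz
  · intro hconv
    refine ⟨⋃ a ∈ A, nhdsKer {a}, closure A, isOpen_biUnion fun _ _ ↦ isOpen_nhdsKer,
      isClosed_closure, ?_⟩
    apply Set.Subset.antisymm
    · intro a ha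
      exact ⟨Set.mem_biUnion ha (subset_nhdsKer rfl), subset_closure ha⟩
    · rintro y ⟨hyU, hyC⟩
      obtain ⟨a, haA, hay⟩ := Set.mem_iUnion₂.1 hyU
      rw [mem_nhdsKer_singleton, specializes_iff_mem_closure] at hay
      -- y ∈ closure A = ⋃ z ∈ A, closure {z}
      have : closure A = ⋃ z ∈ A, closure {z} := by
        rw [← Set.biUnion_of_singleton A]
        simp_rw [closure_iUnion]
        simp
      rw [this] at hyC
      obtain ⟨z, hzA, hyz⟩ := Set.mem_iUnion₂.1 hyC
      exact hconv a haA z hzA y hay hyz
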